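/- If observables B and C are jointly commuting (all B_y, C_z mutually commute), then there exists an atomic observable A such that, relative to the Lüders instrument 𝓛_x^A(ρ) = A_x ρ A_x measuring A, one has B = (B|A) and C = (C|A), i.e., B_y = Σ_x A_x B_y A_x and C_z = Σ_x A_x C_z A_x for all y, z. -/

import Mathlib

open scoped ComplexOrder

open Matrix BigOperators

/-- An effect on a finite-dimensional Hilbert space: `0 ≤ a ≤ I`. -/
def IsEffect {n : ℕ} (a : Matrix (Fin n) (Fin n) ℂ) : Prop :=
  a.PosSemidef ∧ (1 - a).PosSemidef

/-- An atomic effect: a rank-one (orthogonal) projection. -/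
def IsAtomicEffect {n : ℕ} (a : Matrix (Fin n) (Fin n) ℂ) : Prop :=
  a.IsHermitian ∧ a * a = a ∧ a.rank = 1

section Aux
variable {n : ℕ}

noncomputable def projMat (w : EuclideanSpace ℂ (Fin n)) : Matrix (Fin n) (Fin n) ℂ :=
  Matrix.vecMulVec w (star (w : Fin n → ℂ))

lemma projMat_apply (w : EuclideanSpace ℂ (Fin n)) (i j : Fin n) :
    projMat w i j = w i * starRingEnd ℂ (w j) := rfl

lemma projMat_hermitian (w : EuclideanSpace ℂ (Fin n)) : (projMat w).IsHermitian := by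
  ext i j
  simp [Matrix.conjTranspose_apply, projMat_apply, mul_comm]

lemma mul_projMat_of_mulVec (M : Matrix (Fin n) (Fin n) ℂ) (w : EuclideanSpace ℂ (Fin n))
    (μ : ℂ) (h : M *ᵥ (w : Fin n → ℂ) = μ • (w : Fin n → ℂ)) :
    M * projMat w = μ • projMat w := by
  ext i j
  have h' := congrFun h i
  simp only [Matrix.mulVec, dotProduct, PiLp.smul_apply, Pi.smul_apply, smul_eq_mul] at h'
  simp only [Matrix.mul_apply, projMat_apply, Matrix.smul_apply, smul_eq_mul]
  calc ∑ k, M i k * (w k * starRingEnd ℂ (w j))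
      = (∑ k, M i k * w k) * starRingEnd ℂ (w j) := by
        rw [Finset.sum_mul]
        exact Finset.sum_congr rfl fun k _ => by ring
    _ = μ * (w i * starRingEnd ℂ (w j)) := by rw [h']; ring

lemma projMat_inner (w : EuclideanSpace ℂ (Fin n)) (hw : ‖w‖ = 1) :
    (∑ k, starRingEnd ℂ (w k) * w k) = 1 := by
  have : (inner ℂ w w : ℂ) = 1 := by
    rw [inner_self_eq_norm_sq_to_K, hw]; norm_num
  simpa only [PiLp.inner_apply, RCLike.inner_apply'] using this

lemma projMat_idem (w : EuclideanSpace ℂ (Fin n)) (hw : ‖w‖ = 1) :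
    projMat w * projMat w = projMat w := by
  ext i j
  simp only [Matrix.mul_apply, projMat_apply]
  calc ∑ k, w i * starRingEnd ℂ (w k) * (w k * starRingEnd ℂ (w j))
      = (w i * starRingEnd ℂ (w j)) * ∑ k, starRingEnd ℂ (w k) * w k := by
        rw [Finset.mul_sum]; exact Finset.sum_congr rfl fun k _ => by ring
    _ = w i * starRingEnd ℂ (w j) := by rw [projMat_inner w hw, mul_one]

lemma projMat_mulVec_self (w : EuclideanSpace ℂ (Fin n)) (hw : ‖w‖ = 1) :
    projMat w *ᵥ (w : Fin n → ℂ) = (w : Fin n → ℂ) := by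
  funext i
  simp only [Matrix.mulVec, dotProduct, projMat_apply]
  calc ∑ k, w i * starRingEnd ℂ (w k) * w k
      = w i * ∑ k, starRingEnd ℂ (w k) * w k := by
        rw [Finset.mul_sum]; exact Finset.sum_congr rfl fun k _ => by ring
    _ = w i := by rw [projMat_inner w hw, mul_one]

lemma projMat_rank (w : EuclideanSpace ℂ (Fin n)) (hw : ‖w‖ = 1) :
    (projMat w).rank = 1 := by
  have hw0 : (w : Fin n → ℂ) ≠ 0 := by
    intro h
    have hz : w = 0 := by ext i; exact congrFun h i
    rw [hz] at hw; simp at hw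
  have hle : (projMat w).rank ≤ 1 := by
    have he : projMat w = Matrix.replicateCol Unit (w : Fin n → ℂ) * Matrix.replicateRow Unit (star (w : Fin n → ℂ)) :=
      Matrix.vecMulVec_eq Unit _ _
    rw [he]
    calc (Matrix.replicateCol Unit (w : Fin n → ℂ) * Matrix.replicateRow Unit (star (w : Fin n → ℂ))).rank
        ≤ (Matrix.replicateCol Unit (w : Fin n → ℂ)).rank := Matrix.rank_mul_le_left _ _
      _ ≤ Fintype.card Unit := Matrix.rank_le_card_width _
      _ = 1 := by simp
  have hmem : (w : Fin n → ℂ) ∈ LinearMap.range (projMat w).mulVecLin :=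
    ⟨(w : Fin n → ℂ), projMat_mulVec_self w hw⟩
  have hnt : Nontrivial (LinearMap.range (projMat w).mulVecLin) :=
    nontrivial_of_ne ⟨_, hmem⟩ 0 (fun h => hw0 (by simpa using congrArg Subtype.val h))
  have hpos : 0 < (projMat w).rank := by
    rw [Matrix.rank]
    exact Module.finrank_pos_iff.mpr hnt
  omega

lemma sum_projMat (b : OrthonormalBasis (Fin n) ℂ (EuclideanSpace ℂ (Fin n))) :
    ∑ x, projMat (b x) = 1 := by
  ext i j
  have key := b.sum_inner_mul_inner (EuclideanSpace.single i (1:ℂ)) (EuclideanSpace.single j (1:ℂ))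
  simp only [EuclideanSpace.inner_single_left, EuclideanSpace.inner_single_right, _root_.map_one,
    one_mul, mul_one, EuclideanSpace.single_apply] at key
  simp only [Matrix.sum_apply, projMat_apply, Matrix.one_apply]
  rw [key]
  by_cases h : i = j <;> simp [h, eq_comm]

end Aux

set_option maxHeartbeats 1000000 in
/-- if observables `B = {B_y}`, `C = {C_z}` are jointly commuting, then
there is an atomic observable `A = {A_x}` such that, relative to the Lüders
instrument `𝓛_x^A(ρ) = A_x ρ A_x` measuring `A`, `B = (B|A)` and `C = (C|A)`:
`B_y = Σ_x A_x B_y A_x` and `C_z = Σ_x A_x C_z A_x` for all `y, z`. -/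
theorem atomic_observable_of_jointly_commuting {n : ℕ} {Y Z : Type*}
    [Fintype Y] [Fintype Z]
    (B : Y → Matrix (Fin n) (Fin n) ℂ) (C : Z → Matrix (Fin n) (Fin n) ℂ)
    (hB : ∀ y, IsEffect (B y)) (hBsum : ∑ y, B y = 1)
    (hC : ∀ z, IsEffect (C z)) (hCsum : ∑ z, C z = 1)
    (hBB : ∀ y y', B y * B y' = B y' * B y)
    (hCC : ∀ z z', C z * C z' = C z' * C z)
    (hBC : ∀ y z, B y * C z = C z * B y) :
    ∃ A : Fin n → Matrix (Fin n) (Fin n) ℂ,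
      (∀ x, IsAtomicEffect (A x)) ∧ (∑ x, A x = 1) ∧
      (∀ y, B y = ∑ x, A x * B y * A x) ∧
      (∀ z, C z = ∑ x, A x * C z * A x) := by
  classical
  let M : Y ⊕ Z → Matrix (Fin n) (Fin n) ℂ := Sum.elim B C
  have hHerm : ∀ i, (M i).IsHermitian := by
    rintro (y | z)
    · exact (hB y).1.1
    · exact (hC z).1.1
  have hMM : ∀ i j, M i * M j = M j * M i := by
    rintro (y | z) (y' | z') <;>
      simp only [M, Sum.elim_inl, Sum.elim_inr]
    · exact hBB y y'
    · exact hBC y z'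
    · exact (hBC y' z).symm
    · exact hCC z z'
  let T : Y ⊕ Z → (EuclideanSpace ℂ (Fin n) →ₗ[ℂ] EuclideanSpace ℂ (Fin n)) :=
    fun i => Matrix.toEuclideanLin (M i)
  have hTsymm : ∀ i, (T i).IsSymmetric :=
    fun i => Matrix.isHermitian_iff_isSymmetric.mp (hHerm i)
  have mulEq : ∀ i j, T i ∘ₗ T j = Matrix.toEuclideanLin (M i * M j) := by
    intro i j
    apply LinearMap.ext; intro v
    show Matrix.toEuclideanLin (M i) (Matrix.toEuclideanLin (M j) v) = _
    simp [Matrix.toEuclideanLin_apply, Matrix.mulVec_mulVec]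
  have hTcomm : Pairwise (Function.onFun Commute T) := by
    intro i j _
    show T i * T j = T j * T i
    rw [Module.End.mul_eq_comp, Module.End.mul_eq_comp, mulEq, mulEq, hMM]
  let V : ((Y ⊕ Z) → ℂ) → Submodule ℂ (EuclideanSpace ℂ (Fin n)) :=
    fun χ => ⨅ i, Module.End.eigenspace (T i) (χ i)
  have hOrth := LinearMap.IsSymmetric.orthogonalFamily_iInf_eigenspaces hTsymm
  have hTop : ⨆ χ, V χ = ⊤ :=
    LinearMap.IsSymmetric.iSup_iInf_eq_top_of_commute hTsymm hTcomm
  have hInd : iSupIndep V := hOrth.independent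
  haveI : Fintype {χ // V χ ≠ ⊥} := hInd.fintypeNeBotOfFiniteDimensional
  let V' : {χ // V χ ≠ ⊥} → Submodule ℂ (EuclideanSpace ℂ (Fin n)) := fun χ => V χ.1
  have hOrth' := hOrth.comp
    (Subtype.val_injective : Function.Injective (fun γ : {χ // V χ ≠ ⊥} => γ.1))
  have hInd' : iSupIndep V' := hInd.comp Subtype.val_injective
  have hTop' : ⨆ γ, V' γ = ⊤ := by
    apply le_antisymm le_top
    rw [← hTop]
    apply iSup_le; intro χ
    by_cases h : V χ = ⊥
    · rw [h]; exact bot_le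
    · exact le_iSup_of_le ⟨χ, h⟩ le_rfl
  have hInternal : DirectSum.IsInternal V' :=
    DirectSum.isInternal_submodule_of_iSupIndep_of_iSup_eq_top hInd' hTop'
  have hn : Module.finrank ℂ (EuclideanSpace ℂ (Fin n)) = n := finrank_euclideanSpace_fin
  let b := hInternal.subordinateOrthonormalBasis hn hOrth'
  have hnorm : ∀ x, ‖b x‖ = 1 := fun x => b.orthonormal.1 x
  have heig : ∀ x i, ∃ μ : ℂ, M i *ᵥ (b x : Fin n → ℂ) = μ • (b x : Fin n → ℂ) := by
    intro x i
    have hmem := hInternal.subordinateOrthonormalBasis_subordinate hn x hOrth'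
    set χ := hInternal.subordinateOrthonormalBasisIndex hn x hOrth' with hχ
    refine ⟨χ.1 i, ?_⟩
    have h1 : T i (b x) = χ.1 i • b x :=
      Module.End.mem_eigenspace_iff.mp ((Submodule.mem_iInf _).mp hmem i)
    have h2 := congrArg (WithLp.equiv 2 (Fin n → ℂ)) h1
    simpa [Matrix.toEuclideanLin_apply, T] using h2
  refine ⟨fun x => projMat (b x), ?_, sum_projMat b, ?_, ?_⟩
  · exact fun x => ⟨projMat_hermitian _, projMat_idem _ (hnorm x), projMat_rank _ (hnorm x)⟩
  · intro y
    have key : ∀ x, projMat (b x) * B y * projMat (b x) = B y * projMat (b x) := by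
      intro x
      obtain ⟨μ, hμ⟩ := heig x (Sum.inl y)
      have h1 : B y * projMat (b x) = μ • projMat (b x) :=
        mul_projMat_of_mulVec _ _ _ hμ
      rw [mul_assoc, h1, Matrix.mul_smul, projMat_idem _ (hnorm x)]
    calc B y = B y * ∑ x, projMat (b x) := by rw [sum_projMat b, mul_one]
      _ = ∑ x, B y * projMat (b x) := Finset.mul_sum _ _ _
      _ = ∑ x, projMat (b x) * B y * projMat (b x) :=
          Finset.sum_congr rfl fun x _ => (key x).symm
  · intro z
    have key : ∀ x, projMat (b x) * C z * projMat (b x) = C z * projMat (b x) := by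
      intro x
      obtain ⟨μ, hμ⟩ := heig x (Sum.inr z)
      have h1 : C z * projMat (b x) = μ • projMat (b x) :=
        mul_projMat_of_mulVec _ _ _ hμ
      rw [mul_assoc, h1, Matrix.mul_smul, projMat_idem _ (hnorm x)]
    calc C z = C z * ∑ x, projMat (b x) := by rw [sum_projMat b, mul_one]
      _ = ∑ x, C z * projMat (b x) := Finset.mul_sum _ _ _
      _ = ∑ x, projMat (b x) * C z * projMat (b x) :=
          Finset.sum_congr rfl fun x _ => (key x).symm
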